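/- Let p be an odd prime and write p - 1 = 2^n · z with z odd. Let r ∈ (ZMod p)ˣ have multiplicative order 2^n, and let g ∈ (ZMod p)ˣ. Then r·g has multiplicative order p - 1 if and only if g is a square in (ZMod p)ˣ and for every odd prime q dividing p - 1 one has g^((p-1)/(2q)) ≠ 1. In particular, the set { r·h : h of order p - 1 } does not depend on the choice of r of order 2^n. -/

import Mathlib

lemma aux_key (p : ℕ) (hp : p.Prime) (hp2 : p ≠ 2) (n z : ℕ) (hz : Odd z)
    (hnz : p - 1 = 2 ^ n * z) (r g : (ZMod p)ˣ) (hr : orderOf r = 2 ^ n) :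
    orderOf (r * g) = p - 1 ↔
      IsSquare g ∧ ∀ q : ℕ, q.Prime → Odd q → q ∣ p - 1 → g ^ ((p - 1) / (2 * q)) ≠ 1 := by
  haveI : Fact p.Prime := ⟨hp⟩
  haveI : Fact (2 < p) := ⟨lt_of_le_of_ne hp.two_le (Ne.symm hp2)⟩
  have hpow : ∀ x : (ZMod p)ˣ, x ^ (p - 1) = 1 := fun x => ZMod.units_pow_card_sub_one_eq_one p x
  have hodd : Odd p := hp.odd_of_ne_two hp2
  have hn1 : 1 ≤ n := by
    rcases Nat.eq_zero_or_pos n with h | h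
    · subst h; simp only [pow_zero, one_mul] at hnz
      rw [Nat.odd_iff] at hodd hz; omega
    · exact h
  obtain ⟨k, rfl⟩ : ∃ k, n = k + 1 := ⟨n - 1, by omega⟩
  set m := 2 ^ k * z with hm
  have hpm : p - 1 = 2 * m := by rw [hnz, hm, pow_succ]; ring
  have hp1 : 1 ≤ p - 1 := by have := hp.two_le; omega
  have hm1 : 1 ≤ m := by omega
  have hneg : (-1 : (ZMod p)ˣ) ≠ 1 := by
    intro h
    have h2 := congrArg Units.val h
    rw [Units.val_neg, Units.val_one] at h2
    exact ZMod.neg_one_ne_one h2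
  have hsq : ∀ u : (ZMod p)ˣ, u ^ 2 = 1 → u = 1 ∨ u = -1 := by
    intro u hu
    have h2 : (u : ZMod p) * u = 1 := by
      have := congrArg Units.val hu
      rwa [Units.val_pow_eq_pow_val, sq, Units.val_one] at this
    rcases mul_self_eq_one_iff.mp h2 with h | h
    · left; exact Units.ext (by simpa using h)
    · right; exact Units.ext (by simpa using h)
  have hp2m : p / 2 = m := by rw [Nat.odd_iff] at hodd; omega
  have heuler : ∀ x : (ZMod p)ˣ, IsSquare x ↔ x ^ m = 1 := by
    intro x
    rw [← hp2m, ← ZMod.euler_criterion_units p x]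
    constructor
    · rintro ⟨y, rfl⟩; exact ⟨y, sq y⟩
    · rintro ⟨y, rfl⟩; exact ⟨y, sq y⟩
  have hrm : r ^ m = -1 := by
    have h1 : (r ^ m) ^ 2 = 1 := by rw [← pow_mul, mul_comm, ← hpm]; exact hpow r
    have h2 : r ^ m ≠ 1 := by
      intro h
      have hdvd := orderOf_dvd_of_pow_eq_one h
      rw [hr] at hdvd
      have h3 : 2 ∣ z := by
        rcases hdvd with ⟨c, hc⟩
        rw [hm, pow_succ] at hc
        have : z = 2 * c := by
          have h4 : 2 ^ k * z = 2 ^ k * (2 * c) := by rw [hc]; ring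
          exact Nat.eq_of_mul_eq_mul_left (pow_pos (by norm_num) k) h4
        exact ⟨c, this⟩
      rw [Nat.odd_iff] at hz; omega
    rcases hsq _ h1 with h | h
    · exact absurd h h2
    · exact h
  -- helper: for odd prime q dividing p-1, q ∣ z
  have hqz : ∀ q : ℕ, q.Prime → Odd q → q ∣ p - 1 → q ∣ z := by
    intro q hq hqodd hqd
    rw [hnz] at hqd
    rcases (Nat.Prime.dvd_mul hq).mp hqd with h | h
    · exfalso
      have := hq.dvd_of_dvd_pow h
      have : q = 2 := (Nat.prime_dvd_prime_iff_eq hq Nat.prime_two).mp this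
      rw [Nat.odd_iff] at hqodd; omega
    · exact h
  have hiff : orderOf (r * g) = p - 1 ↔
      ∀ q : ℕ, q.Prime → q ∣ p - 1 → (r * g) ^ ((p - 1) / q) ≠ 1 := by
    constructor
    · intro ho q hq hqd h
      have hdvd := orderOf_dvd_of_pow_eq_one h
      rw [ho] at hdvd
      have hpos : 0 < (p - 1) / q := Nat.div_pos (Nat.le_of_dvd (by omega) hqd) hq.pos
      have hlt : (p - 1) / q < p - 1 := Nat.div_lt_self (by omega) hq.one_lt
      have := Nat.le_of_dvd hpos hdvd
      omega
    · intro h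
      exact orderOf_eq_of_pow_and_pow_div_prime (by omega) (hpow _) h
  rw [hiff]
  constructor
  · intro h
    have hgsq : IsSquare g := by
      have h2 := h 2 Nat.prime_two ⟨m, hpm⟩
      rw [hpm, Nat.mul_div_cancel_left m (by norm_num)] at h2
      rw [mul_pow, hrm] at h2
      have hgm2 : (g ^ m) ^ 2 = 1 := by rw [← pow_mul, mul_comm, ← hpm]; exact hpow g
      rcases hsq _ hgm2 with hh | hh
      · exact (heuler g).mpr hh
      · exfalso; apply h2; rw [hh]; simp
    refine ⟨hgsq, ?_⟩
    intro q hq hqodd hqd h1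
    obtain ⟨j, hj⟩ := hqz q hq hqodd hqd
    have he1 : (p - 1) / (2 * q) = 2 ^ k * j := by
      have : p - 1 = 2 * q * (2 ^ k * j) := by rw [hnz, hj, pow_succ]; ring
      rw [this, Nat.mul_div_cancel_left _ (Nat.mul_pos (by norm_num) hq.pos)]
    rw [he1] at h1
    have he2 : (p - 1) / q = 2 ^ (k + 1) * j := by
      have : p - 1 = q * (2 ^ (k + 1) * j) := by rw [hnz, hj]; ring
      rw [this, Nat.mul_div_cancel_left _ hq.pos]
    apply h q hq hqd
    rw [he2, mul_pow]
    have hr1 : r ^ (2 ^ (k + 1) * j) = 1 := by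
      rw [pow_mul, ← hr, pow_orderOf_eq_one, one_pow]
    have hg1 : g ^ (2 ^ (k + 1) * j) = 1 := by
      have : (2 : ℕ) ^ (k + 1) * j = 2 ^ k * j * 2 := by ring
      rw [this, pow_mul, h1, one_pow]
    rw [hr1, hg1, one_mul]
  · rintro ⟨hgsq, hG⟩ q hq hqd
    have hgm : g ^ m = 1 := (heuler g).mp hgsq
    by_cases hq2 : q = 2
    · subst hq2
      rw [hpm, Nat.mul_div_cancel_left m (by norm_num), mul_pow, hrm, hgm, mul_one]
      exact hneg
    · have hqodd : Odd q := hq.odd_of_ne_two hq2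
      obtain ⟨j, hj⟩ := hqz q hq hqodd hqd
      have h1 := hG q hq hqodd hqd
      have he1 : (p - 1) / (2 * q) = 2 ^ k * j := by
        have : p - 1 = 2 * q * (2 ^ k * j) := by rw [hnz, hj, pow_succ]; ring
        rw [this, Nat.mul_div_cancel_left _ (Nat.mul_pos (by norm_num) hq.pos)]
      rw [he1] at h1
      have he2 : (p - 1) / q = 2 ^ (k + 1) * j := by
        have : p - 1 = q * (2 ^ (k + 1) * j) := by rw [hnz, hj]; ring
        rw [this, Nat.mul_div_cancel_left _ hq.pos]
      rw [he2, mul_pow]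
      have hr1 : r ^ (2 ^ (k + 1) * j) = 1 := by
        rw [pow_mul, ← hr, pow_orderOf_eq_one, one_pow]
      rw [hr1, one_mul]
      intro hcon
      have hcon2 : (g ^ (2 ^ k * j)) ^ 2 = 1 := by
        rw [← pow_mul]
        have : (2 : ℕ) ^ k * j * 2 = 2 ^ (k + 1) * j := by ring
        rw [this]; exact hcon
      rcases hsq _ hcon2 with hh | hh
      · exact h1 hh
      · have : g ^ m = -1 := by
          have hmq : m = 2 ^ k * j * q := by rw [hm, hj]; ring
          rw [hmq, pow_mul, hh, hqodd.neg_one_pow]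
        rw [hgm] at this
        exact hneg this.symm

theorem mul_by_order_two_pow_primitive_iff (p : ℕ) (hp : p.Prime) (hp2 : p ≠ 2)
    (n z : ℕ) (hz : Odd z) (hnz : p - 1 = 2 ^ n * z) :
    (∀ r g : (ZMod p)ˣ, orderOf r = 2 ^ n →
      (orderOf (r * g) = p - 1 ↔
        IsSquare g ∧
          ∀ q : ℕ, q.Prime → Odd q → q ∣ p - 1 → g ^ ((p - 1) / (2 * q)) ≠ 1)) ∧
    (∀ r r' : (ZMod p)ˣ, orderOf r = 2 ^ n → orderOf r' = 2 ^ n →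
      {x : (ZMod p)ˣ | ∃ h : (ZMod p)ˣ, orderOf h = p - 1 ∧ x = r * h} =
        {x : (ZMod p)ˣ | ∃ h : (ZMod p)ˣ, orderOf h = p - 1 ∧ x = r' * h}) := by
  have key2 : ∀ s x : (ZMod p)ˣ, orderOf s = 2 ^ n →
      ((∃ h : (ZMod p)ˣ, orderOf h = p - 1 ∧ x = s * h) ↔
        (IsSquare x ∧ ∀ q : ℕ, q.Prime → Odd q → q ∣ p - 1 → x ^ ((p - 1) / (2 * q)) ≠ 1)) := by
    intro s x hs
    have hk := aux_key p hp hp2 n z hz hnz s⁻¹ x (by rw [orderOf_inv, hs])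
    constructor
    · rintro ⟨h, hh, rfl⟩
      refine hk.mp ?_
      have h2 : s⁻¹ * (s * h) = h := by group
      rw [h2]; exact hh
    · intro hc
      exact ⟨s⁻¹ * x, hk.mpr hc, by group⟩
  constructor
  · exact fun r g hr => aux_key p hp hp2 n z hz hnz r g hr
  · intro r r' hr hr'
    ext x
    simp only [Set.mem_setOf_eq]
    rw [key2 r x hr, key2 r' x hr']
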